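/- Let X be a compact metric space, G a group of homeomorphisms of X, and H a normal subgroup of G that is closed in G (with the uniform topology). Then the map φ : G/H → (closure(G)/closure(H))ˣ, φ(gH) = closure(gH), is an injective group homomorphism and a topological embedding: the Hausdorff-metric distance between closure(g₁H) and closure(g₂H) equals the Hausdorff-metric distance between g₁H and g₂H as subsets of G. -/

import Mathlib

open EMetric in
/-- With `X` compact metric, `G` a group of homeomorphisms of `X`, and
`H ⊴ G` closed in `G` (uniform topology), the map `φ : G/H → (closure G/closure H)ˣ`,
`φ(gH) = closure(gH)`, is injective and a topological embedding: the Hausdorff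
distance between `closure(g₁H)` and `closure(g₂H)` equals the Hausdorff distance
between the cosets `g₁H` and `g₂H` themselves. -/
theorem stmt12 {X : Type*} [MetricSpace X] [CompactSpace X]
    (G H : Set (X ≃ₜ X))
    (hG1 : Homeomorph.refl X ∈ G) (hG2 : ∀ f ∈ G, ∀ g ∈ G, f.trans g ∈ G)
    (hG3 : ∀ f ∈ G, f.symm ∈ G) (hHG : H ⊆ G)
    (hH1 : Homeomorph.refl X ∈ H) (hH2 : ∀ f ∈ H, ∀ g ∈ H, f.trans g ∈ H)
    (hH3 : ∀ f ∈ H, f.symm ∈ H)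
    (hnorm : ∀ g ∈ G, ∀ h ∈ H, (g.symm.trans h).trans g ∈ H)
    -- `H` is closed in `G` (for the uniform topology of `C(X,X)`)
    (hHclosed : closure {q : C(X, X) | ∃ h ∈ H, q = (h : C(X, X))} ∩
        {q : C(X, X) | ∃ g ∈ G, q = (g : C(X, X))} ⊆
      {q : C(X, X) | ∃ h ∈ H, q = (h : C(X, X))}) :
    let coset : (X ≃ₜ X) → Set C(X, X) :=
      fun g => {q : C(X, X) | ∃ h ∈ H, q = ((g : C(X, X))).comp (h : C(X, X))}
    -- `φ` is injective: equal coset closures force equal cosets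
    (∀ g₁ ∈ G, ∀ g₂ ∈ G, closure (coset g₁) = closure (coset g₂) →
      ∃ h ∈ H, g₂ = h.trans g₁) ∧
    -- `φ` is an embedding: taking closures does not change Hausdorff distances
    (∀ g₁ ∈ G, ∀ g₂ ∈ G,
      hausdorffEdist (closure (coset g₁)) (closure (coset g₂)) =
        hausdorffEdist (coset g₁) (coset g₂)) := by
  intro coset
  constructor
  · intro g₁ hg₁ g₂ hg₂ hcl
    -- g₂ ∈ closure (coset g₁)
    have hmem : (g₂ : C(X, X)) ∈ closure (coset g₂) := by
      apply subset_closure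
      exact ⟨Homeomorph.refl X, hH1, by ext x; simp⟩
    rw [← hcl] at hmem
    -- postcompose with g₁.symm
    set F : C(X, X) → C(X, X) := fun q => ((g₁.symm : C(X, X))).comp q with hF
    have hFc : Continuous F := ContinuousMap.continuous_postcomp _
    have himg : F '' (coset g₁) ⊆ {q : C(X, X) | ∃ h ∈ H, q = (h : C(X, X))} := by
      rintro q ⟨p, ⟨h, hh, rfl⟩, rfl⟩
      refine ⟨h, hh, ?_⟩
      ext x
      simp [hF]
    have hmem2 : F (g₂ : C(X, X)) ∈
        closure {q : C(X, X) | ∃ h ∈ H, q = (h : C(X, X))} := by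
      have := image_closure_subset_closure_image (s := coset g₁) hFc (by exact ⟨_, hmem, rfl⟩)
      exact closure_mono himg this
    have hmemG : F (g₂ : C(X, X)) ∈ {q : C(X, X) | ∃ g ∈ G, q = (g : C(X, X))} := by
      refine ⟨g₂.trans g₁.symm, hG2 _ hg₂ _ (hG3 _ hg₁), ?_⟩
      ext x; simp [hF]
    obtain ⟨h, hh, hhe⟩ := hHclosed ⟨hmem2, hmemG⟩
    refine ⟨h, hh, ?_⟩
    ext x
    have := ContinuousMap.congr_fun hhe x
    simp [hF] at this
    rw [Homeomorph.trans_apply]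
    rw [← this]
    simp
  · intro g₁ _ g₂ _
    exact hausdorffEdist_closure
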